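/- Every set S in the support of the yes-distribution D_yes (defined from random Talagrand-style DNF terms on {-1,0,1}^n) is convex; more generally, any set S ⊆ {-1,0,1}^n that is downward closed under the outward-oriented poset (i.e., y ∉ S and y ⪯ x implies x ∉ S) is convex. -/
import Mathlib


/-- The ternary hypercube `{-1,0,1}^n` as a subset of `ℝ^n`. -/
def ternarySet (n : ℕ) : Set (Fin n → ℝ) :=
  {x | ∀ i, x i = -1 ∨ x i = 0 ∨ x i = 1}

/-- Any `S ⊆ {-1,0,1}^n` that is downward closed under the outward-oriented poset
(i.e. `y ∉ S` and `y ⪯ x` implies `x ∉ S`) is convex: `S = Conv(S) ∩ {-1,0,1}^n`.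
In particular every set in the support of the yes-distribution `D_yes` of random
Talagrand-style DNFs, being of this form, is convex. -/
theorem stmt_19 (n : ℕ) (S : Set (Fin n → ℝ)) (hS : S ⊆ ternarySet n)
    (hdown : ∀ y ∈ ternarySet n, ∀ x ∈ ternarySet n,
      y ∉ S → (∀ i, y i ≠ 0 → x i = y i) → x ∉ S) :
    S = convexHull ℝ S ∩ ternarySet n := by
  apply Set.Subset.antisymm
  · exact Set.subset_inter (subset_convexHull ℝ S) hS
  · rintro x ⟨hxc, hxt⟩
    by_contra hxS
    -- linear functional f z = ∑ x i * z i
    set f : (Fin n → ℝ) → ℝ := fun z => ∑ i, x i * z i with hf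
    have hlin : IsLinearMap ℝ f := by
      constructor
      · intro a b
        simp [hf, mul_add, Finset.sum_add_distrib]
      · intro c a
        simp [hf, Finset.mul_sum, mul_left_comm]
    -- every z ∈ S satisfies f z ≤ f x - 1
    have hsep : S ⊆ {z | f z ≤ f x - 1} := by
      intro z hz
      have hzt := hS hz
      -- there is a coordinate i with x i ≠ 0 and z i ≠ x i
      have hbad : ∃ i, x i ≠ 0 ∧ z i ≠ x i := by
        by_contra h
        push_neg at h
        exact hdown x hxt z hzt hxS (fun i hi => (h i hi)) hz
      obtain ⟨i₀, hx0, hzx⟩ := hbad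
      have key : (1 : ℝ) ≤ ∑ i, (x i * x i - x i * z i) := by
        have hterm : ∀ i ∈ Finset.univ, (0 : ℝ) ≤ x i * x i - x i * z i := by
          intro i _
          rcases hxt i with h1 | h1 | h1 <;> rcases hzt i with h2 | h2 | h2 <;>
            simp [h1, h2] <;> norm_num
        have hterm0 : (1 : ℝ) ≤ x i₀ * x i₀ - x i₀ * z i₀ := by
          rcases hxt i₀ with h1 | h1 | h1 <;> rcases hzt i₀ with h2 | h2 | h2 <;>
            first
              | (exfalso; exact hx0 h1)
              | (exfalso; exact hzx (h2.trans h1.symm))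
              | (simp only [h1, h2]; norm_num)
        calc (1 : ℝ) ≤ x i₀ * x i₀ - x i₀ * z i₀ := hterm0
          _ ≤ ∑ i, (x i * x i - x i * z i) :=
              Finset.single_le_sum hterm (Finset.mem_univ i₀)
      have : f z ≤ f x - 1 := by
        simp only [hf]
        rw [Finset.sum_sub_distrib] at key
        linarith
      exact this
    have hconv : Convex ℝ {z | f z ≤ f x - 1} := convex_halfSpace_le hlin _
    have := convexHull_min hsep hconv hxc
    simp at this
    linarith [this]
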